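/- For all ν > 0, γ₀ > 0, γ₁ ∈ (0,1), γ₂ > 0, and 0 < t ≤ T with T = ν⁻¹γ₀²γ₁², the unique positive zero ỹ(t) = √( ((4νt+γ₀²γ₁²)·γ₀²γ₁²/(4νt)) · ln( (4νt+γ₀²γ₁²)^{3/2}/(γ₀³γ₁³) ) ) of h₁(t,·) satisfies √(3/2)·γ₀γ₁ ≤ ỹ(t) ≤ 2·γ₀γ₁. -/

import Mathlib

open MeasureTheory Real Filter Set

noncomputable section

/-- The function `h₁(t,y) = γ₂·γ₁³·(4νt+γ₀²γ₁²)^{−3/2}·exp(−y²/(4νt+γ₀²γ₁²))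
  − γ₂·γ₀^{−3}·exp(−y²/(γ₀²γ₁²))` from the proof of Proposition 2.4. -/
def h1fun (ν γ₀ γ₁ γ₂ : ℝ) (t y : ℝ) : ℝ :=
  γ₂ * γ₁^3 / (Real.sqrt (4*ν*t + γ₀^2*γ₁^2))^3 * Real.exp (-y^2 / (4*ν*t + γ₀^2*γ₁^2))
    - γ₂ / γ₀^3 * Real.exp (-y^2 / (γ₀^2*γ₁^2))

/-- The unique positive zero `ỹ(t)` of `h₁(t,·)` (for `t > 0`). -/
def ytil (ν γ₀ γ₁ : ℝ) (t : ℝ) : ℝ :=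
  Real.sqrt ((4*ν*t + γ₀^2*γ₁^2) * γ₀^2 * γ₁^2 / (4*ν*t)
    * Real.log ((Real.sqrt (4*ν*t + γ₀^2*γ₁^2))^3 / (γ₀^3 * γ₁^3)))

lemma key_ineq (v : ℝ) (hv1 : 1 < v) (hv5 : v ≤ 5) :
    v * Real.log v ≤ (8/3) * (v - 1) := by
  have hv0 : (0:ℝ) < v := by linarith
  rcases le_or_gt v (8/3) with h | h
  · have hlog := Real.log_le_sub_one_of_pos hv0
    nlinarith [Real.log_nonneg hv1.le]
  · have he := Real.exp_one_gt_d9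
    have hepos : (0:ℝ) < Real.exp 1 := Real.exp_pos 1
    have hlog : Real.log v ≤ v / Real.exp 1 := by
      have h1 := Real.log_le_sub_one_of_pos (x := v / Real.exp 1)
        (div_pos hv0 hepos)
      rw [Real.log_div (ne_of_gt hv0) (Real.exp_ne_zero 1), Real.log_exp] at h1
      linarith
    have h3 : v * Real.log v ≤ v * (v / Real.exp 1) :=
      mul_le_mul_of_nonneg_left hlog hv0.le
    have h2 : v * (v / Real.exp 1) ≤ (8/3) * (v - 1) := by
      rw [mul_div_assoc', div_le_iff₀ hepos]
      nlinarith [mul_nonneg (by linarith : (0:ℝ) ≤ v - 8/3) (by linarith : (0:ℝ) ≤ 5 - v),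
        mul_le_mul_of_nonneg_left he.le (by linarith : (0:ℝ) ≤ v - 1)]
    linarith

/-- two-sided bound on the zero `ỹ(t)` of `h₁`, proof of
Proposition 2.4. For `0 < t ≤ T = ν⁻¹γ₀²γ₁²`, one has
`√(3/2)·γ₀γ₁ ≤ ỹ(t) ≤ 2·γ₀γ₁`. -/
theorem ytil_bounds (ν γ₀ γ₁ γ₂ t : ℝ) (hν : 0 < ν) (hγ₀ : 0 < γ₀)
    (hγ₁ : γ₁ ∈ Set.Ioo (0:ℝ) 1) (hγ₂ : 0 < γ₂)
    (ht : 0 < t) (htT : t ≤ ν⁻¹ * γ₀^2 * γ₁^2) :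
    Real.sqrt (3/2) * γ₀ * γ₁ ≤ ytil ν γ₀ γ₁ t ∧ ytil ν γ₀ γ₁ t ≤ 2 * γ₀ * γ₁ := by
  obtain ⟨hγ₁0, hγ₁1⟩ := hγ₁
  set a : ℝ := γ₀^2 * γ₁^2 with ha_def
  set s : ℝ := 4*ν*t with hs_def
  have ha : 0 < a := by positivity
  have hs : 0 < s := by positivity
  have hsa : s ≤ 4 * a := by
    have h := mul_le_mul_of_nonneg_left htT (by linarith : (0:ℝ) ≤ 4*ν)
    have : 4*ν*(ν⁻¹ * γ₀^2 * γ₁^2) = 4 * a := by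
      field_simp [ha_def]; ring
    calc s = 4*ν*t := hs_def
    _ ≤ 4*ν*(ν⁻¹ * γ₀^2 * γ₁^2) := h
    _ = 4 * a := this
  set v : ℝ := (s + a) / a with hv_def
  have hv1 : 1 < v := by
    rw [hv_def, lt_div_iff₀ ha]; linarith
  have hv0 : 0 < v := by linarith
  have hv5 : v ≤ 5 := by
    rw [hv_def, div_le_iff₀ ha]; linarith
  -- log simplification
  have hga : γ₀ * γ₁ = Real.sqrt a := by
    rw [ha_def, ← mul_pow, Real.sqrt_sq (by positivity)]
  have hL : Real.log ((Real.sqrt (s+a))^3 / (γ₀^3 * γ₁^3)) = 3/2 * Real.log v := by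
    have h1 : (Real.sqrt (s+a))^3 / (γ₀^3 * γ₁^3) = (Real.sqrt v)^3 := by
      rw [hv_def, Real.sqrt_div (by positivity), ← hga]
      rw [div_pow, mul_pow]
    rw [h1, Real.log_pow, Real.log_sqrt hv0.le]
    push_cast; ring
  have hyt : ytil ν γ₀ γ₁ t = Real.sqrt ((s+a) * a / s * (3/2 * Real.log v)) := by
    unfold ytil
    congr 1
    rw [show 4*ν*t + γ₀^2*γ₁^2 = s + a from rfl, hL]
    rw [ha_def]; ring
  -- bounds on the log
  have hlog_low : s / (s+a) ≤ Real.log v := by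
    have h1 := Real.log_le_sub_one_of_pos (x := 1/v) (by positivity)
    rw [one_div, Real.log_inv] at h1
    have h2 : 1 - v⁻¹ ≤ Real.log v := by linarith
    have h3 : 1 - v⁻¹ = s / (s+a) := by
      rw [hv_def]
      field_simp
      ring
    linarith [h3 ▸ h2]
  have hlog_up : Real.log v ≤ 8/3 * (s / (s+a)) := by
    have h1 := key_ineq v hv1 hv5
    have h2 : Real.log v ≤ (8/3) * (v-1) / v := by
      rw [le_div_iff₀ hv0]; nlinarith
    have h3 : (8/3) * (v-1) / v = 8/3 * (s / (s+a)) := by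
      rw [hv_def]
      field_simp
      ring
    linarith [h3 ▸ h2]
  have hsplus : (0:ℝ) < s + a := by linarith
  have hcoef : (0:ℝ) < (s+a) * a / s := by positivity
  -- bounds on the argument
  have hX_low : 3/2 * a ≤ (s+a) * a / s * (3/2 * Real.log v) := by
    have h1 : (s+a) * a / s * (3/2 * (s/(s+a))) ≤ (s+a) * a / s * (3/2 * Real.log v) := by
      apply mul_le_mul_of_nonneg_left (by linarith) hcoef.le
    have h2 : (s+a) * a / s * (3/2 * (s/(s+a))) = 3/2 * a := by
      field_simp
    linarith [h2 ▸ h1]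
  have hX_up : (s+a) * a / s * (3/2 * Real.log v) ≤ 4 * a := by
    have h1 : (s+a) * a / s * (3/2 * Real.log v) ≤ (s+a) * a / s * (3/2 * (8/3 * (s/(s+a)))) := by
      apply mul_le_mul_of_nonneg_left (by linarith) hcoef.le
    have h2 : (s+a) * a / s * (3/2 * (8/3 * (s/(s+a)))) = 4 * a := by
      field_simp; ring
    linarith [h2 ▸ h1]
  constructor
  · rw [hyt]
    calc Real.sqrt (3/2) * γ₀ * γ₁ = Real.sqrt (3/2) * Real.sqrt a := by
          rw [mul_assoc, hga]
    _ = Real.sqrt (3/2 * a) := (Real.sqrt_mul (by norm_num) a).symm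
    _ ≤ _ := Real.sqrt_le_sqrt hX_low
  · rw [hyt]
    calc Real.sqrt ((s+a) * a / s * (3/2 * Real.log v)) ≤ Real.sqrt (4 * a) :=
          Real.sqrt_le_sqrt hX_up
    _ = 2 * (γ₀ * γ₁) := by
          rw [Real.sqrt_mul (by norm_num), hga,
            show (4:ℝ) = 2^2 by norm_num, Real.sqrt_sq (by norm_num)]
    _ = 2 * γ₀ * γ₁ := by ring
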